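/- Let n, k be integers with k even, 0 < k, and k < n/2. Then there exists a set P ⊂ ℝⁿ of k-sparse vectors with |P| = (n/k)^(k/4) (rounded down) such that ‖x - x'‖² ≥ 1/2 for all distinct x, x' ∈ P, and each x ∈ P has unit norm with entries in {0, ±1/√k}. -/

import Mathlib

open Finset

section packingAux

/-- Greedy construction: if every "ball" has at most `V` elements and `M * V ≤ |α|`,
there is a set of `M` pairwise non-related elements. -/
lemma greedy_code {α : Type*} [Fintype α] [DecidableEq α]
    (R : α → α → Prop) [DecidableRel R]
    (hsym : ∀ a b, R a b → R b a) (hrefl : ∀ a, R a a)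
    (V : ℕ) (hV : 0 < V) (hball : ∀ a, (univ.filter (fun b => R a b)).card ≤ V) :
    ∀ M : ℕ, M * V ≤ Fintype.card α →
      ∃ S : Finset α, S.card = M ∧ ∀ a ∈ S, ∀ b ∈ S, a ≠ b → ¬ R a b := by
  intro M
  induction M with
  | zero => exact fun _ => ⟨∅, by simp⟩
  | succ M ih =>
    intro hMV
    obtain ⟨S, hScard, hSsep⟩ :=
      ih (le_trans (Nat.mul_le_mul_right V (Nat.le_succ M)) hMV)
    set U : Finset α := S.biUnion (fun a => univ.filter (fun b => R a b)) with hU_def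
    have hUcard : U.card < Fintype.card α := by
      have h1 : U.card ≤ ∑ a ∈ S, (univ.filter (fun b => R a b)).card :=
        Finset.card_biUnion_le
      have h2 : ∑ a ∈ S, (univ.filter (fun b => R a b)).card ≤ M * V := by
        calc ∑ a ∈ S, (univ.filter (fun b => R a b)).card
            ≤ S.card • V := Finset.sum_le_card_nsmul S _ V (fun a _ => hball a)
          _ = M * V := by rw [hScard]; simp [Nat.smul_one_eq_cast]
      have h3 : M * V < (M + 1) * V := by nlinarith [hV]
      omega
    obtain ⟨b, hb⟩ : ∃ b, b ∉ U := by
      by_contra h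
      push_neg at h
      have hsub : (univ : Finset α) ⊆ U := fun b _ => h b
      have := Finset.card_le_card hsub
      rw [Finset.card_univ] at this
      omega
    have hbS : b ∉ S := fun hbS => hb (Finset.mem_biUnion.2 ⟨b, hbS, by simp [hrefl b]⟩)
    have hbR : ∀ a ∈ S, ¬ R a b := by
      intro a ha hR
      exact hb (Finset.mem_biUnion.2 ⟨a, ha, by simp [hR]⟩)
    refine ⟨insert b S, ?_, ?_⟩
    · rw [Finset.card_insert_of_notMem hbS, hScard]
    · intro x hx y hy hxy hR
      rcases Finset.mem_insert.1 hx with hxb | hxS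
      · rcases Finset.mem_insert.1 hy with hyb | hyS
        · exact hxy (hxb.trans hyb.symm)
        · subst hxb; exact hbR y hyS (hsym _ _ hR)
      · rcases Finset.mem_insert.1 hy with hyb | hyS
        · subst hyb; exact hbR x hxS hR
        · exact hSsep x hxS y hyS hxy hR

/-- Ball-counting in Hamming space: the number of words agreeing with `w` on more than
`3k/4` coordinates is at most `2^k * q^s`, provided each such word disagrees on at most
`s` coordinates. -/
lemma ball_card {k q s : ℕ} (hq : 0 < q) (w : Fin k → Fin q)
    (hs : ∀ y : Fin k → Fin q, 3 * k < 4 * (univ.filter (fun i => y i = w i)).card →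
      (univ.filter (fun i => y i ≠ w i)).card ≤ s) :
    (univ.filter (fun y : Fin k → Fin q =>
      3 * k < 4 * (univ.filter (fun i => y i = w i)).card)).card ≤ 2 ^ k * q ^ s := by
  classical
  set B := univ.filter (fun y : Fin k → Fin q =>
      3 * k < 4 * (univ.filter (fun i => y i = w i)).card) with hB
  have hsub : B ⊆ (univ.powerset.filter (fun T : Finset (Fin k) => T.card ≤ s)).biUnion
      (fun T => Fintype.piFinset (fun i => if i ∈ T then (univ : Finset (Fin q)) else {w i})) := by
    intro y hy
    have hy' := (Finset.mem_filter.1 hy).2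
    refine Finset.mem_biUnion.2 ⟨univ.filter (fun i => y i ≠ w i), ?_, ?_⟩
    · exact Finset.mem_filter.2 ⟨Finset.mem_powerset.2 (Finset.subset_univ _), hs y hy'⟩
    · refine Fintype.mem_piFinset.2 (fun i => ?_)
      by_cases h : y i = w i
      · simp [h]
      · simp [h]
  calc B.card ≤ _ := Finset.card_le_card hsub
    _ ≤ ∑ T ∈ univ.powerset.filter (fun T : Finset (Fin k) => T.card ≤ s),
        (Fintype.piFinset (fun i => if i ∈ T then (univ : Finset (Fin q)) else {w i})).card :=
        Finset.card_biUnion_le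
    _ ≤ (univ.powerset.filter (fun T : Finset (Fin k) => T.card ≤ s)).card • q ^ s := by
        refine Finset.sum_le_card_nsmul _ _ _ (fun T hT => ?_)
        have hTs := (Finset.mem_filter.1 hT).2
        rw [Fintype.card_piFinset]
        calc ∏ i, (if i ∈ T then (univ : Finset (Fin q)) else {w i}).card
            = ∏ i, (if i ∈ T then q else 1) := by
              refine Finset.prod_congr rfl (fun i _ => ?_)
              by_cases h : i ∈ T <;> simp [h]
          _ = q ^ T.card := by
              rw [Finset.prod_ite_mem, Finset.univ_inter, Finset.prod_const]
          _ ≤ q ^ s := Nat.pow_le_pow_right hq hTs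
    _ ≤ 2 ^ k * q ^ s := by
        have : (univ.powerset.filter (fun T : Finset (Fin k) => T.card ≤ s)).card ≤ 2 ^ k := by
          calc (univ.powerset.filter (fun T : Finset (Fin k) => T.card ≤ s)).card
              ≤ (univ : Finset (Fin k)).powerset.card := Finset.card_filter_le _ _
            _ = 2 ^ k := by rw [Finset.card_powerset, Finset.card_univ, Fintype.card_fin]
        simpa [smul_eq_mul] using Nat.mul_le_mul_right (q ^ s) this

variable {n k m : ℕ}

/-- The embedding of block `i`, slot `v % m` into `Fin n`. -/
def emb (hm : 0 < m) (hkm : k * m ≤ n) (i : Fin k) (v : ℕ) : Fin n :=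
  ⟨i.1 * m + v % m, by
    have h1 : v % m < m := Nat.mod_lt _ hm
    have h2 : i.1 + 1 ≤ k := i.2
    have h3 : (i.1 + 1) * m ≤ k * m := Nat.mul_le_mul_right m h2
    have h4 : i.1 * m + m = (i.1 + 1) * m := by ring
    omega⟩

lemma emb_eq_iff (hm : 0 < m) (hkm : k * m ≤ n) {i i' : Fin k} {v v' : ℕ}
    (h : emb hm hkm i v = emb hm hkm i' v') : i = i' ∧ v % m = v' % m := by
  have hval : i.1 * m + v % m = i'.1 * m + v' % m := congrArg Fin.val h
  have hmod : v % m = v' % m := by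
    have h2 := congrArg (· % m) hval
    simp only [mul_comm _ m] at h2
    rwa [Nat.mul_add_mod, Nat.mul_add_mod, Nat.mod_eq_of_lt (Nat.mod_lt v hm),
      Nat.mod_eq_of_lt (Nat.mod_lt v' hm)] at h2
  refine ⟨?_, hmod⟩
  rw [hmod] at hval
  exact Fin.ext (Nat.eq_of_mul_eq_mul_right hm (Nat.add_right_cancel hval))

/-- The sign of a symbol `v ∈ Fin (2m)`. -/
noncomputable def sgn (m v : ℕ) : ℝ := if v < m then 1 else -1

lemma sgn_mul_self (m v : ℕ) : sgn m v * sgn m v = 1 := by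
  unfold sgn; split <;> norm_num

lemma sgn_mul_neg {m v v' : ℕ} (hv : v < 2 * m) (hv' : v' < 2 * m)
    (hmod : v % m = v' % m) (hne : v ≠ v') : sgn m v * sgn m v' = -1 := by
  have hm : 0 < m := by omega
  have key : (v < m ∧ ¬ v' < m) ∨ (¬ v < m ∧ v' < m) := by
    rcases lt_or_ge v m with h1 | h1 <;> rcases lt_or_ge v' m with h2 | h2
    · exfalso; rw [Nat.mod_eq_of_lt h1, Nat.mod_eq_of_lt h2] at hmod; exact hne hmod
    · exact Or.inl ⟨h1, by omega⟩
    · exact Or.inr ⟨by omega, h2⟩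
    · exfalso
      have e1 : v % m = v - m := by
        rw [Nat.mod_eq_sub_mod h1, Nat.mod_eq_of_lt (by omega)]
      have e2 : v' % m = v' - m := by
        rw [Nat.mod_eq_sub_mod h2, Nat.mod_eq_of_lt (by omega)]
      rw [e1, e2] at hmod
      exact hne (by omega)
  unfold sgn
  rcases key with ⟨h1, h2⟩ | ⟨h1, h2⟩ <;> simp [h1, h2]

/-- The sparse vector associated with a codeword. -/
noncomputable def vec (hm : 0 < m) (hkm : k * m ≤ n) (w : Fin k → Fin (2 * m)) :
    Fin n → ℝ :=
  fun j => ∑ i : Fin k,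
    if j = emb hm hkm i (w i).1 then sgn m (w i).1 / Real.sqrt k else 0

/-- Inner products of the sparse vectors. -/
lemma vec_inner (hm : 0 < m) (hkm : k * m ≤ n) (w w' : Fin k → Fin (2 * m)) :
    ∑ j, vec hm hkm w j * vec hm hkm w' j
      = ∑ i : Fin k, (if (w i).1 % m = (w' i).1 % m then
          (sgn m (w i).1 / Real.sqrt k) * (sgn m (w' i).1 / Real.sqrt k) else 0) := by
  classical
  unfold vec
  have step1 : ∀ j : Fin n,
      (∑ i : Fin k, if j = emb hm hkm i (w i).1 then sgn m (w i).1 / Real.sqrt k else 0) *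
      (∑ i : Fin k, if j = emb hm hkm i (w' i).1 then sgn m (w' i).1 / Real.sqrt k else 0)
      = ∑ i : Fin k, ∑ i' : Fin k,
          (if j = emb hm hkm i (w i).1 then sgn m (w i).1 / Real.sqrt k else 0) *
          (if j = emb hm hkm i' (w' i').1 then sgn m (w' i').1 / Real.sqrt k else 0) :=
    fun j => Finset.sum_mul_sum _ _ _ _
  rw [Finset.sum_congr rfl (fun j _ => step1 j)]
  rw [Finset.sum_comm]
  refine Finset.sum_congr rfl (fun i _ => ?_)
  rw [Finset.sum_comm]
  have step2 : ∀ i' : Fin k,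
      ∑ j : Fin n, (if j = emb hm hkm i (w i).1 then sgn m (w i).1 / Real.sqrt k else 0) *
          (if j = emb hm hkm i' (w' i').1 then sgn m (w' i').1 / Real.sqrt k else 0)
      = if emb hm hkm i (w i).1 = emb hm hkm i' (w' i').1 then
          (sgn m (w i).1 / Real.sqrt k) * (sgn m (w' i').1 / Real.sqrt k) else 0 := by
    intro i'
    rw [Finset.sum_eq_single (emb hm hkm i (w i).1)]
    · simp only [if_pos rfl]
      by_cases h : emb hm hkm i (w i).1 = emb hm hkm i' (w' i').1 <;> simp [h]
    · intro j _ hj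
      simp [hj]
    · intro h; exact absurd (Finset.mem_univ _) h
  rw [Finset.sum_congr rfl (fun i' _ => step2 i')]
  rw [Finset.sum_eq_single i]
  · by_cases h : (w i).1 % m = (w' i).1 % m
    · have : emb hm hkm i (w i).1 = emb hm hkm i (w' i).1 := by
        apply Fin.ext
        simp [emb, h]
      simp [this, h]
    · have : emb hm hkm i (w i).1 ≠ emb hm hkm i (w' i).1 := by
        intro he
        exact h (emb_eq_iff hm hkm he).2
      simp [this, h]
  · intro i' _ hi'
    have : emb hm hkm i (w i).1 ≠ emb hm hkm i' (w' i').1 := by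
      intro he
      exact hi'.symm ((emb_eq_iff hm hkm he).1)
    simp [this]
  · intro h; exact absurd (Finset.mem_univ _) h

lemma vec_norm (hk : 0 < k) (hm : 0 < m) (hkm : k * m ≤ n) (w : Fin k → Fin (2 * m)) :
    ∑ j, vec hm hkm w j ^ 2 = 1 := by
  have hsq : ∀ j, vec hm hkm w j ^ 2 = vec hm hkm w j * vec hm hkm w j := fun j => sq (vec hm hkm w j) ▸ by ring
  rw [Finset.sum_congr rfl (fun j _ => hsq j), vec_inner hm hkm w w]
  have hterm : ∀ i : Fin k, (if (w i).1 % m = (w i).1 % m then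
      (sgn m (w i).1 / Real.sqrt k) * (sgn m (w i).1 / Real.sqrt k) else 0) = 1 / (k : ℝ) := by
    intro i
    rw [if_pos rfl]
    have h1 : (sgn m (w i).1 / Real.sqrt k) * (sgn m (w i).1 / Real.sqrt k)
        = (sgn m (w i).1 * sgn m (w i).1) / (Real.sqrt k * Real.sqrt k) := by ring
    rw [h1, sgn_mul_self, Real.mul_self_sqrt (Nat.cast_nonneg k)]
  rw [Finset.sum_congr rfl (fun i _ => hterm i), Finset.sum_const, Finset.card_univ,
    Fintype.card_fin, nsmul_eq_mul]
  field_simp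

lemma vec_support (hm : 0 < m) (hkm : k * m ≤ n) (w : Fin k → Fin (2 * m)) :
    ({j | vec hm hkm w j ≠ 0} : Set (Fin n)).ncard ≤ k := by
  classical
  have hsub : ({j | vec hm hkm w j ≠ 0} : Set (Fin n)) ⊆
      ↑(univ.image (fun i : Fin k => emb hm hkm i (w i).1)) := by
    intro j hj
    by_contra hji
    apply hj
    unfold vec
    refine Finset.sum_eq_zero (fun i _ => ?_)
    rw [if_neg]
    intro he
    exact hji (by simpa [he] using Finset.mem_image_of_mem (fun i : Fin k => emb hm hkm i (w i).1) (Finset.mem_univ i))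
  calc ({j | vec hm hkm w j ≠ 0} : Set (Fin n)).ncard
      ≤ (↑(univ.image (fun i : Fin k => emb hm hkm i (w i).1)) : Set (Fin n)).ncard :=
        Set.ncard_le_ncard hsub (Set.toFinite _)
    _ = (univ.image (fun i : Fin k => emb hm hkm i (w i).1)).card := Set.ncard_coe_finset _
    _ ≤ (univ : Finset (Fin k)).card := Finset.card_image_le
    _ = k := by rw [Finset.card_univ, Fintype.card_fin]

lemma vec_entries (hm : 0 < m) (hkm : k * m ≤ n) (w : Fin k → Fin (2 * m)) (j : Fin n) :
    vec hm hkm w j = 0 ∨ vec hm hkm w j = 1 / Real.sqrt k ∨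
      vec hm hkm w j = -(1 / Real.sqrt k) := by
  classical
  unfold vec
  by_cases hj : ∃ i : Fin k, j = emb hm hkm i (w i).1
  · obtain ⟨i, hi⟩ := hj
    rw [Finset.sum_eq_single i]
    · rw [if_pos hi]
      unfold sgn
      split
      · right; left; norm_num
      · right; right; rw [neg_div, one_div]
    · intro i' _ hi'
      rw [if_neg]
      intro he
      rw [hi] at he
      exact hi'.symm (emb_eq_iff hm hkm he).1
    · intro h; exact absurd (Finset.mem_univ _) h
  · left
    refine Finset.sum_eq_zero (fun i _ => ?_)
    rw [if_neg (fun he => hj ⟨i, he⟩)]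

end packingAux

/-- For `k` even, `0 < k`, `k < n/2`, there is a packing set `P` of `k`-sparse vectors
with `|P| = ⌊(n/k)^(k/4)⌋`, pairwise squared distances at least `1/2`, and each element a
unit-norm vector with entries in `{0, ±1/√k}`. -/
theorem stmt_8 (n k : ℕ) (hk : 0 < k) (hke : Even k) (hn : 2 * k < n) :
    ∃ P : Finset (Fin n → ℝ),
      P.card = ⌊((n : ℝ) / k) ^ ((k : ℝ) / 4)⌋₊ ∧
      (∀ x ∈ P, ∀ x' ∈ P, x ≠ x' → (1 : ℝ) / 2 ≤ ∑ i, (x i - x' i) ^ 2) ∧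
      (∀ x ∈ P,
        ({i | x i ≠ 0} : Set (Fin n)).ncard ≤ k ∧
        (∀ i, x i = 0 ∨ x i = 1 / Real.sqrt k ∨ x i = -(1 / Real.sqrt k)) ∧
        ∑ i, x i ^ 2 = 1) := by
  classical
  have hke2 : k % 2 = 0 := Nat.even_iff.mp hke
  set m : ℕ := n / k with hm_def
  have hm2 : 2 ≤ m := (Nat.le_div_iff_mul_le hk).2 (by omega)
  have hm : 0 < m := by omega
  have hkm : k * m ≤ n := by rw [mul_comm]; exact Nat.div_mul_le_self n k
  set q : ℕ := 2 * m with hq_def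
  have hq4 : 4 ≤ q := by omega
  have hq : 0 < q := by omega
  set M : ℕ := ⌊((n : ℝ) / k) ^ ((k : ℝ) / 4)⌋₊ with hM_def
  set s : ℕ := k / 4 with hs_def
  set e : ℕ := k / 2 - s with he_def
  -- the relation: too much agreement
  set R : (Fin k → Fin q) → (Fin k → Fin q) → Prop :=
    fun w w' => 3 * k < 4 * (univ.filter (fun i => w i = w' i)).card with hR_def
  have hsym : ∀ a b, R a b → R b a := by
    intro a b hab
    simpa [hR_def, eq_comm] using hab
  have hrefl : ∀ a, R a a := by
    intro a
    show 3 * k < 4 * (univ.filter (fun i => a i = a i)).card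
    have h1 : (univ.filter (fun i : Fin k => a i = a i)).card = k := by
      simp
    omega
  -- ball bound
  have hball : ∀ w : Fin k → Fin q,
      (univ.filter (fun y => R w y)).card ≤ 2 ^ k * q ^ s := by
    intro w
    have := ball_card (k := k) (q := q) (s := s) hq w ?_
    · convert this using 3
      simp [hR_def, eq_comm]
    · intro y hy
      have hsplit := Finset.card_filter_add_card_filter_not
        (s := (univ : Finset (Fin k))) (fun i => y i = w i)
      rw [Finset.card_univ, Fintype.card_fin] at hsplit
      simp only [ne_eq]
      omega
  -- counting inequality
  have hMV : M * (2 ^ k * q ^ s) ≤ Fintype.card (Fin k → Fin q) := by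
    rw [Fintype.card_fun, Fintype.card_fin, Fintype.card_fin]
    have hMe : M ≤ q ^ e := by
      have hx0 : (0 : ℝ) ≤ ((n : ℝ) / k) := by positivity
      have h1 : ((n : ℝ) / k) < (q : ℝ) := by
        have hnk : (n : ℝ) < ((m : ℝ) + 1) * k := by
          have h0 : k * m + n % k = n := Nat.div_add_mod n k
          have hmod : n % k < k := Nat.mod_lt n hk
          have h1 : n < (m + 1) * k := by
            calc n = k * m + n % k := h0.symm
              _ < k * m + k := Nat.add_lt_add_left hmod (k * m)
              _ = (m + 1) * k := by ring
          exact_mod_cast h1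
        have h2 : ((n : ℝ) / k) < (m : ℝ) + 1 := by
          rw [div_lt_iff₀ (by exact_mod_cast hk)]
          linarith
        have h3 : (m : ℝ) + 1 ≤ (q : ℝ) := by
          have : m + 1 ≤ q := by omega
          exact_mod_cast this
        linarith
      have h2 : (M : ℝ) ≤ ((n : ℝ) / k) ^ ((k : ℝ) / 4) :=
        Nat.floor_le (Real.rpow_nonneg hx0 _)
      have h3 : ((n : ℝ) / k) ^ ((k : ℝ) / 4) < (q : ℝ) ^ ((k : ℝ) / 4) :=
        Real.rpow_lt_rpow hx0 h1 (by positivity)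
      have h4 : (q : ℝ) ^ ((k : ℝ) / 4) ≤ (q : ℝ) ^ ((e : ℕ) : ℝ) := by
        apply Real.rpow_le_rpow_of_exponent_le
        · exact_mod_cast Nat.one_le_iff_ne_zero.2 (by omega)
        · have : k ≤ 4 * e := by omega
          have h5 : (k : ℝ) ≤ 4 * (e : ℝ) := by exact_mod_cast this
          linarith
      have h5 : (q : ℝ) ^ ((e : ℕ) : ℝ) = ((q ^ e : ℕ) : ℝ) := by
        rw [Real.rpow_natCast]
        push_cast
        ring
      have : (M : ℝ) < ((q ^ e : ℕ) : ℝ) := by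
        calc (M : ℝ) ≤ _ := h2
          _ < _ := h3
          _ ≤ _ := h4
          _ = _ := h5
      exact le_of_lt (by exact_mod_cast this)
    have h2k : 2 ^ k ≤ q ^ (k / 2) := by
      have : 2 ^ k = 4 ^ (k / 2) := by
        have hk2 : 2 * (k / 2) = k := by omega
        rw [show (4 : ℕ) = 2 ^ 2 by norm_num, ← pow_mul, hk2]
      rw [this]
      exact Nat.pow_le_pow_left hq4 _
    calc M * (2 ^ k * q ^ s) ≤ q ^ e * (q ^ (k / 2) * q ^ s) := by
          exact Nat.mul_le_mul hMe (Nat.mul_le_mul_right _ h2k)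
      _ = q ^ (e + (k / 2 + s)) := by rw [pow_add, pow_add]
      _ = q ^ k := by congr 1; omega
  -- greedy code
  obtain ⟨S, hScard, hSsep⟩ := greedy_code R hsym hrefl (2 ^ k * q ^ s)
    (by positivity) hball M hMV
  -- pairwise distance bound for the vectors
  have hdist : ∀ w ∈ S, ∀ w' ∈ S, w ≠ w' →
      (1 : ℝ) / 2 ≤ ∑ j, (vec hm hkm w j - vec hm hkm w' j) ^ 2 := by
    intro w hw w' hw' hne
    have hA : 4 * (univ.filter (fun i => w i = w' i)).card ≤ 3 * k := by
      have := hSsep w hw w' hw' hne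
      simp only [hR_def] at this
      omega
    have hinner : ∑ j, vec hm hkm w j * vec hm hkm w' j ≤ 3 / 4 := by
      rw [vec_inner hm hkm w w']
      have hterm : ∀ i : Fin k,
          (if (w i).1 % m = (w' i).1 % m then
            (sgn m (w i).1 / Real.sqrt k) * (sgn m (w' i).1 / Real.sqrt k) else 0)
          ≤ (if w i = w' i then 1 / (k : ℝ) else 0) := by
        intro i
        by_cases heq : w i = w' i
        · rw [if_pos heq, if_pos (by rw [heq])]
          have h1 : (sgn m (w i).1 / Real.sqrt k) * (sgn m (w' i).1 / Real.sqrt k)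
              = (sgn m (w i).1 * sgn m (w' i).1) / (Real.sqrt k * Real.sqrt k) := by ring
          rw [h1, heq, sgn_mul_self, Real.mul_self_sqrt (Nat.cast_nonneg k)]
        · rw [if_neg heq]
          by_cases hmod : (w i).1 % m = (w' i).1 % m
          · rw [if_pos hmod]
            have h1 : (sgn m (w i).1 / Real.sqrt k) * (sgn m (w' i).1 / Real.sqrt k)
                = (sgn m (w i).1 * sgn m (w' i).1) / (Real.sqrt k * Real.sqrt k) := by ring
            have hne' : (w i).1 ≠ (w' i).1 := fun h => heq (Fin.ext h)
            rw [h1, sgn_mul_neg (w i).2 (w' i).2 hmod hne',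
              Real.mul_self_sqrt (Nat.cast_nonneg k)]
            have hk0 : (0 : ℝ) ≤ (k : ℝ) := Nat.cast_nonneg k
            have h2 : (-1 : ℝ) / k = -(1 / k) := by ring
            rw [h2, neg_nonpos]
            positivity
          · rw [if_neg hmod]
      calc ∑ i : Fin k, (if (w i).1 % m = (w' i).1 % m then
              (sgn m (w i).1 / Real.sqrt k) * (sgn m (w' i).1 / Real.sqrt k) else 0)
          ≤ ∑ i : Fin k, (if w i = w' i then 1 / (k : ℝ) else 0) :=
            Finset.sum_le_sum (fun i _ => hterm i)
        _ = ((univ.filter (fun i => w i = w' i)).card : ℝ) * (1 / k) := by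
            rw [Finset.sum_ite, Finset.sum_const, Finset.sum_const_zero, add_zero,
              nsmul_eq_mul]
        _ ≤ 3 / 4 := by
            have hkR : (0 : ℝ) < k := by exact_mod_cast hk
            have hAR : ((univ.filter (fun i => w i = w' i)).card : ℝ) * 4 ≤ 3 * k := by
              exact_mod_cast (by omega : (univ.filter (fun i => w i = w' i)).card * 4 ≤ 3 * k)
            rw [mul_one_div, div_le_div_iff₀ hkR (by norm_num)]
            linarith
    have hexp : ∑ j, (vec hm hkm w j - vec hm hkm w' j) ^ 2
        = ∑ j, vec hm hkm w j ^ 2 + ∑ j, vec hm hkm w' j ^ 2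
          - 2 * ∑ j, vec hm hkm w j * vec hm hkm w' j := by
      rw [Finset.mul_sum, ← Finset.sum_add_distrib, ← Finset.sum_sub_distrib]
      exact Finset.sum_congr rfl (fun j _ => by ring)
    rw [hexp, vec_norm hk hm hkm w, vec_norm hk hm hkm w']
    linarith
  -- injectivity on S
  have hinj : Set.InjOn (vec hm hkm) ↑S := by
    intro w hw w' hw' hvec
    by_contra hne
    have := hdist w hw w' hw' hne
    rw [hvec] at this
    simp at this
    linarith
  refine ⟨S.image (vec hm hkm), ?_, ?_, ?_⟩
  · rw [Finset.card_image_of_injOn hinj, hScard]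
  · intro x hx x' hx' hxx'
    obtain ⟨w, hw, rfl⟩ := Finset.mem_image.1 hx
    obtain ⟨w', hw', rfl⟩ := Finset.mem_image.1 hx'
    exact hdist w hw w' hw' (fun h => hxx' (by rw [h]))
  · intro x hx
    obtain ⟨w, hw, rfl⟩ := Finset.mem_image.1 hx
    exact ⟨vec_support hm hkm w, vec_entries hm hkm w, vec_norm hk hm hkm w⟩
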